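/- Let X be a complete metric space that is almost n-hyperconvex for some integer n ≥ 3. Then X is n-hyperconvex. -/

import Mathlib

/-- A metric space `X` is `n`-hyperconvex if for every family of `n` closed balls
`B(x i, r i)` with `d(x i, x j) ≤ r i + r j`, the intersection is nonempty. -/
def IsNHyperconvex (X : Type*) [MetricSpace X] (n : ℕ) : Prop :=
  ∀ (x : Fin n → X) (r : Fin n → ℝ), (∀ i, 0 ≤ r i) →
    (∀ i j, dist (x i) (x j) ≤ r i + r j) →
    (⋂ i, Metric.closedBall (x i) (r i)).Nonempty

/-- A metric space `X` is almost `n`-hyperconvex if for every such family of `n` closed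
balls and every `ε > 0`, the intersection of the `ε`-enlarged balls is nonempty. -/
def IsAlmostNHyperconvex (X : Type*) [MetricSpace X] (n : ℕ) : Prop :=
  ∀ (x : Fin n → X) (r : Fin n → ℝ), (∀ i, 0 ≤ r i) →
    (∀ i j, dist (x i) (x j) ≤ r i + r j) →
    ∀ ε > (0 : ℝ), (⋂ i, Metric.closedBall (x i) (r i + ε)).Nonempty

theorem isNHyperconvex_of_isAlmostNHyperconvex (X : Type*) [MetricSpace X] [CompleteSpace X]
    (n : ℕ) (hn : 3 ≤ n) (h : IsAlmostNHyperconvex X n) : IsNHyperconvex X n := by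
  intro x r hr0 hxr
  -- a third element of `Fin n` distinct from two given ones
  have third : ∀ u v : Fin n, ∃ w : Fin n, w ≠ u ∧ w ≠ v := by
    intro u v
    by_contra hc
    push_neg at hc
    have hsub : (Finset.univ : Finset (Fin n)) ⊆ {u, v} := by
      intro w _
      simp only [Finset.mem_insert, Finset.mem_singleton]
      rcases eq_or_ne w u with hw | hw
      · exact Or.inl hw
      · exact Or.inr (hc w hw)
    have hcard := Finset.card_le_card hsub
    have h2 : ({u, v} : Finset (Fin n)).card ≤ 2 :=
      (Finset.card_insert_le _ _).trans (by simp)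
    simp only [Finset.card_univ, Fintype.card_fin] at hcard
    omega
  -- single application of almost-hyperconvexity, replacing the ball at index `l`
  -- by a ball around the current point `p`
  have step : ∀ (l : Fin n) (p : X) (ρ : ℝ) (δ : Fin n → ℝ), 0 ≤ ρ → (∀ i, 0 ≤ δ i) →
      (∀ i, i ≠ l → dist p (x i) ≤ ρ + (r i + δ i)) → ∀ t : ℝ, 0 < t →
      ∃ q : X, dist q p ≤ ρ + t ∧ ∀ i, i ≠ l → dist q (x i) ≤ r i + δ i + t := by
    intro l p ρ δ hρ hδ hp t ht
    set y : Fin n → X := fun i => if i = l then p else x i with hy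
    set R : Fin n → ℝ := fun i => if i = l then ρ else r i + δ i with hR
    have hR0 : ∀ i, 0 ≤ R i := by
      intro i
      by_cases hi : i = l
      · simpa [hR, hi] using hρ
      · simpa [hR, hi] using add_nonneg (hr0 i) (hδ i)
    have hadm : ∀ i j, dist (y i) (y j) ≤ R i + R j := by
      intro i j
      by_cases hi : i = l <;> by_cases hj : j = l
      · simp only [hy, hR, hi, hj, if_true, if_pos]
        simp only [dist_self]
        linarith
      · simp only [hy, hR, hi, hj, if_true, if_pos, if_neg, not_false_iff]
        exact hp j hj
      · simp only [hy, hR, hi, hj, if_true, if_pos, if_neg, not_false_iff]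
        rw [dist_comm]
        have := hp i hi
        linarith
      · simp only [hy, hR, hi, hj, if_neg, not_false_iff]
        have h1 := hxr i j
        have h2 := hδ i
        have h3 := hδ j
        linarith
    obtain ⟨q, hq⟩ := h y R hR0 hadm t ht
    rw [Set.mem_iInter] at hq
    refine ⟨q, ?_, ?_⟩
    · have := hq l
      rw [Metric.mem_closedBall] at this
      simpa [hy, hR] using this
    · intro i hi
      have := hq i
      rw [Metric.mem_closedBall] at this
      simpa [hy, hR, hi] using this
  -- the double step: from a point with one "hot" ball at level A and the others at
  -- level A/32, produce a point at level (3/4)*A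
  have dstep : ∀ (k : ℕ) (p : X) (j : Fin n),
      dist p (x j) ≤ r j + (3/4 : ℝ)^k →
      (∀ i, i ≠ j → dist p (x i) ≤ r i + (3/4 : ℝ)^k / 32) →
      ∃ (q : X) (j' : Fin n), dist q p ≤ 2 * (3/4 : ℝ)^k ∧
        dist q (x j') ≤ r j' + (3/4 : ℝ)^(k+1) ∧
        ∀ i, i ≠ j' → dist q (x i) ≤ r i + (3/4 : ℝ)^(k+1) / 32 := by
    intro k p j hhot hcold
    set A : ℝ := (3/4 : ℝ)^k with hA
    have hApos : 0 < A := by positivity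
    have hAsucc : (3/4 : ℝ)^(k+1) = A * (3/4) := by rw [pow_succ]
    obtain ⟨k0, hk0j, -⟩ := third j j
    obtain ⟨l, hlj, hlk0⟩ := third j k0
    -- phase 1: drop ball k0, keep the hot ball j with halved excess
    obtain ⟨q1, hq1p, hq1⟩ := step k0 p (A/2) (fun i => if i = j then A/2 else 0)
      (by positivity)
      (fun i => by split <;> positivity)
      (by
        intro i hik0
        by_cases hij : i = j
        · subst hij; simp only [eq_self_iff_true, if_true]; linarith
        · simp only [if_neg hij]
          have := hcold i hij
          linarith)
      (A/64) (by positivity)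
    have hq1j : dist q1 (x j) ≤ r j + A/2 + A/64 := by
      have := hq1 j (Ne.symm hk0j)
      simp only [eq_self_iff_true, if_true] at this
      linarith
    have hq1k0 : dist q1 (x k0) ≤ r k0 + 35 * A / 64 := by
      have h1 := dist_triangle q1 p (x k0)
      have h2 := hcold k0 hk0j
      linarith
    have hq1cold : ∀ i, i ≠ k0 → i ≠ j → dist q1 (x i) ≤ r i + A/64 := by
      intro i hik0 hij
      have := hq1 i hik0
      simp only [if_neg hij] at this
      linarith
    -- phase 2: drop ball l, recentering around q1
    obtain ⟨q2, hq2q1, hq2⟩ := step l q1 (35 * A / 64) (fun _ => 0)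
      (by positivity)
      (fun _ => le_refl 0)
      (by
        intro i hil
        by_cases hik0 : i = k0
        · subst hik0; linarith
        · by_cases hij : i = j
          · subst hij; linarith
          · have := hq1cold i hik0 hij
            linarith)
      (A/64) (by positivity)
    have hq1l : dist q1 (x l) ≤ r l + A/64 := hq1cold l hlk0 hlj
    refine ⟨q2, l, ?_, ?_, ?_⟩
    · have := dist_triangle q2 q1 p
      linarith
    · have := dist_triangle q2 q1 (x l)
      rw [hAsucc]
      linarith
    · intro i hil
      have := hq2 i hil
      rw [hAsucc]
      linarith
  -- package the double step as a total function
  let Good : ℕ → X × Fin n → Prop := fun k s =>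
    dist s.1 (x s.2) ≤ r s.2 + (3/4 : ℝ)^k ∧
      ∀ i, i ≠ s.2 → dist s.1 (x i) ≤ r i + (3/4 : ℝ)^k / 32
  have hstep : ∀ (k : ℕ) (s : X × Fin n), ∃ s' : X × Fin n,
      Good k s → (Good (k+1) s' ∧ dist s'.1 s.1 ≤ 2 * (3/4 : ℝ)^k) := by
    intro k s
    by_cases hg : Good k s
    · obtain ⟨q, j', h1, h2, h3⟩ := dstep k s.1 s.2 hg.1 hg.2
      exact ⟨(q, j'), fun _ => ⟨⟨h2, h3⟩, h1⟩⟩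
    · exact ⟨s, fun hgood => absurd hgood hg⟩
  choose g hg using hstep
  -- initial point
  obtain ⟨p0, hp0⟩ := h x r hr0 hxr (1/32) (by norm_num)
  rw [Set.mem_iInter] at hp0
  have hn0 : (0 : ℕ) < n := by omega
  have hs0 : Good 0 (p0, ⟨0, hn0⟩) := by
    constructor
    · have := hp0 ⟨0, hn0⟩
      rw [Metric.mem_closedBall] at this
      simp only [pow_zero]
      linarith
    · intro i _
      have := hp0 i
      rw [Metric.mem_closedBall] at this
      simp only [pow_zero]
      linarith
  -- the sequence
  let seq : ℕ → X × Fin n := fun k => Nat.rec (p0, ⟨0, hn0⟩) (fun k s => g k s) k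
  have hseqG : ∀ k, Good k (seq k) := by
    intro k
    induction k with
    | zero => exact hs0
    | succ k ih => exact (hg k (seq k) ih).1
  have hseqd : ∀ k, dist (seq (k+1)).1 (seq k).1 ≤ 2 * (3/4 : ℝ)^k :=
    fun k => (hg k (seq k) (hseqG k)).2
  have hcauchy : CauchySeq (fun k => (seq k).1) := by
    apply cauchySeq_of_le_geometric (3/4) 2 (by norm_num)
    intro k
    rw [dist_comm]
    exact hseqd k
  obtain ⟨q, hq⟩ := cauchySeq_tendsto_of_complete hcauchy
  refine ⟨q, Set.mem_iInter.2 fun i => Metric.mem_closedBall.2 ?_⟩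
  have hbound : ∀ k, dist (seq k).1 (x i) ≤ r i + (3/4 : ℝ)^k := by
    intro k
    have hA : (0:ℝ) ≤ (3/4 : ℝ)^k := by positivity
    rcases eq_or_ne i (seq k).2 with hi | hi
    · rw [hi]
      exact (hseqG k).1
    · have := (hseqG k).2 i hi
      linarith
  have h1 : Filter.Tendsto (fun k => dist (seq k).1 (x i)) Filter.atTop
      (nhds (dist q (x i))) := hq.dist tendsto_const_nhds
  have h2 : Filter.Tendsto (fun k => r i + (3/4 : ℝ)^k) Filter.atTop (nhds (r i)) := by
    have hp := tendsto_pow_atTop_nhds_zero_of_lt_one (by norm_num : (0:ℝ) ≤ 3/4)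
      (by norm_num : (3/4 : ℝ) < 1)
    simpa using tendsto_const_nhds.add hp
  exact le_of_tendsto_of_tendsto' h1 h2 hbound
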